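/- Let 0 → F' → F → F'' → 0 be a short exact sequence of locally free sheaves of finite rank on a scheme (or, more simply, of finite-dimensional vector spaces/modules over a commutative ring). Then for every r ≥ 0, the r-th exterior power Λ^r F admits a finite decreasing filtration F = F^0 ⊇ F^1 ⊇ ⋯ ⊇ F^r ⊇ F^{r+1} = 0 whose successive quotients satisfy F^i/F^{i+1} ≅ Λ^i F' ⊗ Λ^{r−i} F''. -/

import Mathlib

open TensorProduct

set_option synthInstance.maxHeartbeats 2000000
set_option maxHeartbeats 2000000

namespace EPF

open ExteriorAlgebra

variable {R N κ : Type*} [CommRing R] [AddCommGroup N] [Module R N]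

theorem filtration_of_weighted_basis (c : Module.Basis κ R N) (w : κ → ℕ) (r : ℕ)
    (hw : ∀ k, w k ≤ r) :
    ∃ F : ℕ → Submodule R N,
      F 0 = ⊤ ∧ F (r + 1) = ⊥ ∧ (∀ i, F (i + 1) ≤ F i) ∧
      ∀ i, ∃ q : (F i) →ₗ[R] ({k : κ // w k = i} →₀ R),
        Function.Surjective q ∧
        LinearMap.ker q = Submodule.comap (F i).subtype (F (i + 1)) := by
  set F : ℕ → Submodule R N :=
    fun i => ⨅ (k : κ) (_ : w k < i), LinearMap.ker (c.coord k) with hF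
  have memF : ∀ i x, x ∈ F i ↔ ∀ k, w k < i → c.repr x k = 0 := by
    intro i x
    simp [hF, Submodule.mem_iInf, Module.Basis.coord_apply]
  refine ⟨F, ?_, ?_, ?_, ?_⟩
  · rw [eq_top_iff]
    intro x _
    rw [memF]
    intro k hk
    omega
  · rw [eq_bot_iff]
    intro x hx
    rw [memF] at hx
    have : c.repr x = 0 := by
      ext k
      exact hx k (Nat.lt_succ_of_le (hw k))
    have := congrArg c.repr.symm this
    simpa using this
  · intro i x hx
    rw [memF] at hx ⊢
    exact fun k hk => hx k (Nat.lt_succ_of_lt hk)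
  · intro i
    refine ⟨(Finsupp.lsubtypeDomain (M := R) (R := R) {k : κ | w k = i}) ∘ₗ
      (c.repr.toLinearMap ∘ₗ (F i).subtype), ?_, ?_⟩
    · intro v
      set y : κ →₀ R := Finsupp.embDomain (Function.Embedding.subtype _) v with hy
      have hmem : c.repr.symm y ∈ F i := by
        rw [memF]
        intro k hk
        have hknr : k ∉ Set.range (Function.Embedding.subtype (fun k : κ => w k = i)) := by
          rintro ⟨a, rfl⟩
          have h2 := a.2
          change w a.1 = i at h2
          simp only [Function.Embedding.coe_subtype] at hk
          omega
        simp only [LinearEquiv.apply_symm_apply, hy]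
        exact Finsupp.embDomain_notin_range _ _ _ hknr
      refine ⟨⟨c.repr.symm y, hmem⟩, ?_⟩
      ext a
      simp only [LinearMap.coe_comp, Function.comp_apply, Submodule.coe_subtype,
        LinearEquiv.coe_coe, LinearEquiv.apply_symm_apply, Finsupp.lsubtypeDomain_apply,
        Finsupp.subtypeDomain_apply, hy]
      exact Finsupp.embDomain_apply_self _ _ _
    · ext ⟨x, hx⟩
      simp only [LinearMap.mem_ker, LinearMap.coe_comp, Function.comp_apply,
        Submodule.coe_subtype, LinearEquiv.coe_coe, Finsupp.lsubtypeDomain_apply,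
        Submodule.mem_comap, memF]
      rw [memF] at hx
      constructor
      · intro h k hk
        rcases Nat.lt_succ_iff_lt_or_eq.mp hk with h' | h'
        · exact hx k h'
        · exact DFunLike.congr_fun h ⟨k, h'⟩
      · intro h
        ext ⟨k, hk⟩
        exact h k (by omega)


variable {R M ι : Type*} [CommRing R] [AddCommGroup M] [Module R M]
variable [Fintype ι] [LinearOrder ι]

/-- The canonical generator of the exterior power attached to a finset of basis indices. -/
noncomputable def gen (b : Module.Basis ι R M) (r : ℕ) (s : {s : Finset ι // s.card = r}) :
    ⋀[R]^r M :=
  ⟨ιMulti_family R r b s, ιMulti_range R r ⟨_, rfl⟩⟩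

@[simp] lemma gen_coe (b : Module.Basis ι R M) (r : ℕ) (s : {s : Finset ι // s.card = r}) :
    (gen b r s : ExteriorAlgebra R M) =
      ιMulti R r (fun i => b ((s.1.orderIsoOfFin s.2 i : ι))) := rfl

/-- The alternating form computing the `s`-minor of coordinates. -/
noncomputable def dualAlt (b : Module.Basis ι R M) (r : ℕ) (s : {s : Finset ι // s.card = r}) :
    M [⋀^Fin r]→ₗ[R] R :=
  (Matrix.detRowAlternating).compLinearMap
    (LinearMap.pi fun k : Fin r => b.coord ((s.1.orderIsoOfFin s.2 k : ι)))

/-- The linear functional on the exterior algebra extracting the `s`-coefficient in degree `r`. -/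
noncomputable def dualFn (b : Module.Basis ι R M) (r : ℕ) (s : {s : Finset ι // s.card = r}) :
    ExteriorAlgebra R M →ₗ[R] R :=
  ExteriorAlgebra.liftAlternating (Function.update (fun _ => 0) r (dualAlt b r s))

lemma dualFn_apply_ιMulti (b : Module.Basis ι R M) (r : ℕ) (s : {s : Finset ι // s.card = r})
    (v : Fin r → M) :
    dualFn b r s (ιMulti R r v) =
      Matrix.det (Matrix.of fun j k => b.repr (v j) ((s.1.orderIsoOfFin s.2 k : ι))) := by
  rw [dualFn, liftAlternating_apply_ιMulti, Function.update_self]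
  rfl

lemma dualFn_gen (b : Module.Basis ι R M) (r : ℕ) (s t : {s : Finset ι // s.card = r}) :
    dualFn b r s ((gen b r t : ⋀[R]^r M) : ExteriorAlgebra R M) =
      if s = t then 1 else 0 := by
  rw [gen_coe, dualFn_apply_ιMulti]
  by_cases hst : s = t
  · subst hst
    rw [if_pos rfl]
    have : (Matrix.of fun j k => b.repr (b ((s.1.orderIsoOfFin s.2 j : ι)))
        ((s.1.orderIsoOfFin s.2 k : ι))) = (1 : Matrix (Fin r) (Fin r) R) := by
      ext j k
      rw [Matrix.of_apply, Module.Basis.repr_self, Matrix.one_apply, Finsupp.single_apply]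
      by_cases hjk : j = k
      · subst hjk; simp
      · rw [if_neg, if_neg hjk]
        intro hc
        exact hjk (by
          have := (s.1.orderIsoOfFin s.2).injective (Subtype.ext hc)
          exact this)
    rw [this, Matrix.det_one]
  · rw [if_neg hst]
    -- there is an element of `s` not in `t`
    have hne : s.1 ≠ t.1 := fun h => hst (Subtype.ext h)
    have hex : ∃ a ∈ s.1, a ∉ t.1 := by
      by_contra hcon
      push_neg at hcon
      exact hne (Finset.eq_of_subset_of_card_le (fun a ha => hcon a ha)
        (by rw [s.2, t.2]))
    obtain ⟨a, has, hat⟩ := hex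
    set k0 : Fin r := (s.1.orderIsoOfFin s.2).symm ⟨a, has⟩ with hk0
    apply Matrix.det_eq_zero_of_column_eq_zero k0
    intro j
    rw [Matrix.of_apply, Module.Basis.repr_self, Finsupp.single_apply]
    rw [if_neg]
    intro hc
    apply hat
    have h2 : ((s.1.orderIsoOfFin s.2) k0 : ι) = a := by
      rw [hk0, OrderIso.apply_symm_apply]
    have h3 : ((t.1.orderIsoOfFin t.2) j : ι) = a := hc.trans h2
    rw [← h3]
    exact Finset.coe_mem _

lemma linearIndependent_gen_val (b : Module.Basis ι R M) (r : ℕ) :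
    LinearIndependent R
      (fun s : {s : Finset ι // s.card = r} => ((gen b r s : ⋀[R]^r M) : ExteriorAlgebra R M)) := by
  rw [Fintype.linearIndependent_iff]
  intro c hc t
  have h := congrArg (dualFn b r t) hc
  rw [map_sum, map_zero] at h
  simp only [map_smul, dualFn_gen, smul_eq_mul, mul_ite, mul_one, mul_zero] at h
  rwa [Finset.sum_ite_eq (Finset.univ) t c, if_pos (Finset.mem_univ t)] at h

lemma span_ιMulti_family (b : Module.Basis ι R M) (r : ℕ) :
    Submodule.span R (Set.range (ιMulti_family R r b)) = ⋀[R]^r M := by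
  apply le_antisymm
  · rw [Submodule.span_le]
    rintro x ⟨s, rfl⟩
    exact ιMulti_range R r ⟨_, rfl⟩
  · rw [← ιMulti_span_fixedDegree, Submodule.span_le]
    rintro x ⟨v, rfl⟩
    have key : ∀ m : Fin r → ι,
        ιMulti R r (fun j => b (m j)) ∈
          Submodule.span R (Set.range (ιMulti_family R r b)) := by
      intro m
      by_cases hm : Function.Injective m
      · set s : Finset ι := Finset.image m Finset.univ with hs_def
        have hs : s.card = r := by
          rw [hs_def, Finset.card_image_of_injective _ hm, Finset.card_univ, Fintype.card_fin]
        have hmem : ∀ j, m j ∈ s := fun j =>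
          Finset.mem_image_of_mem _ (Finset.mem_univ _)
        set e : Fin r → {x // x ∈ s} := fun j => ⟨m j, hmem j⟩ with he_def
        have he : Function.Injective e := fun a b hab => hm (congrArg Subtype.val hab)
        have hbij : Function.Bijective e :=
          (Fintype.bijective_iff_injective_and_card e).mpr
            ⟨he, by rw [Fintype.card_coe, hs, Fintype.card_fin]⟩
        set π : Equiv.Perm (Fin r) :=
          (Equiv.ofBijective e hbij).trans (s.orderIsoOfFin hs).toEquiv.symm with hπ_def
        have hπ : ∀ j, (s.orderIsoOfFin hs) (π j) = e j := by
          intro j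
          rw [hπ_def]
          simp
        have hfun : (fun j => b (m j)) = (fun k => b ((s.orderIsoOfFin hs k : ι))) ∘ π := by
          funext j
          have := hπ j
          simp only [Function.comp_apply]
          rw [this, he_def]
        rw [hfun, AlternatingMap.map_perm]
        have hmemspan : ιMulti R r (fun k => b ((s.orderIsoOfFin hs k : ι))) ∈
            Submodule.span R (Set.range (ιMulti_family R r b)) :=
          Submodule.subset_span ⟨⟨s, hs⟩, rfl⟩
        rcases Int.units_eq_one_or (Equiv.Perm.sign π) with h | h <;> rw [h]
        · rwa [one_smul]
        · rw [Units.smul_def, Units.val_neg, Units.val_one, neg_zsmul, one_zsmul]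
          exact Submodule.neg_mem _ hmemspan
      · obtain ⟨i1, i2, heq, hne⟩ : ∃ i1 i2, m i1 = m i2 ∧ i1 ≠ i2 := by
          rw [Function.Injective] at hm
          push_neg at hm
          exact hm
        rw [(ιMulti R r (M := M)).map_eq_zero_of_eq
          (fun j => b (m j)) (congrArg b heq) hne]
        exact Submodule.zero_mem _
    have hv : v = fun j => ∑ i : ι, b.repr (v j) i • b i := by
      funext j
      rw [b.sum_repr (v j)]
    have expand : ιMulti R r v =
        ∑ m : Fin r → ι, (∏ j, b.repr (v j) (m j)) • ιMulti R r (fun j => b (m j)) := by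
      conv_lhs => rw [hv]
      rw [show (ιMulti R r (M := M)) (fun j => ∑ i : ι, b.repr (v j) i • b i)
          = (ιMulti R r (M := M)).toMultilinearMap (fun j => ∑ i : ι, b.repr (v j) i • b i)
          from rfl]
      rw [MultilinearMap.map_sum]
      refine Finset.sum_congr rfl fun m _ => ?_
      rw [MultilinearMap.map_smul_univ]
      rfl
    rw [expand]
    exact Submodule.sum_mem _ fun m _ => Submodule.smul_mem _ _ (key m)

/-- A basis of the `r`-th exterior power of a finite free module, indexed by
`r`-element subsets of the basis index type. -/
noncomputable def exteriorBasis (b : Module.Basis ι R M) (r : ℕ) :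
    Module.Basis {s : Finset ι // s.card = r} R (⋀[R]^r M) := by
  refine Module.Basis.mk (v := gen b r) ?_ ?_
  · exact (linearIndependent_gen_val b r).of_comp ((⋀[R]^r M).subtype)
  · intro x _
    have hx : (x : ExteriorAlgebra R M) ∈
        Submodule.span R (Set.range (ιMulti_family R r b)) := by
      rw [span_ιMulti_family]
      exact x.2
    have himg : Set.range (ιMulti_family R r b) =
        (⋀[R]^r M).subtype '' Set.range (gen b r) := by
      rw [← Set.range_comp]
      rfl
    rw [himg, ← Submodule.map_span] at hx
    obtain ⟨y, hy, hyx⟩ := hx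
    have : y = x := Subtype.ext hyx
    rwa [← this]


/-- Splitting `r`-subsets of a sum type with `i` left elements. -/
def sumFinsetEquiv {α β : Type*} [DecidableEq α] [DecidableEq β] (r i : ℕ) (hi : i ≤ r) :
    {k : {s : Finset (α ⊕ β) // s.card = r} // k.1.toLeft.card = i} ≃
      ({s : Finset α // s.card = i} × {t : Finset β // t.card = r - i}) where
  toFun k := ⟨⟨k.1.1.toLeft, k.2⟩, ⟨k.1.1.toRight, by
      have h0 := Finset.card_toLeft_add_card_toRight (u := k.1.1)
      have h1 := k.1.2
      have h2 := k.2
      omega⟩⟩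
  invFun p := ⟨⟨(p.1.1).disjSum p.2.1, by
      rw [Finset.card_disjSum, p.1.2, p.2.2]
      omega⟩, by
      simp [p.1.2]⟩
  left_inv k := Subtype.ext (Subtype.ext k.1.1.toLeft_disjSum_toRight)
  right_inv p := by
    ext : 2 <;> simp


end EPF

/-- **Filtration of exterior powers of an extension** (Hartshorne, Ch. II, Ex. 5.16),
module version: given a short exact sequence `0 → M' → M → M'' → 0` of finite free
modules over a commutative ring `R`, the `r`-th exterior power `⋀^r M` admits a finite
decreasing filtration `⋀^r M = F 0 ⊇ F 1 ⊇ ⋯ ⊇ F r ⊇ F (r+1) = 0` whose successive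
quotients satisfy `F i / F (i+1) ≅ ⋀^i M' ⊗ ⋀^(r-i) M''`.  (The quotient iso is
expressed by a surjective linear map `F i → ⋀^i M' ⊗ ⋀^(r-i) M''` with kernel
`F (i+1) ∩ F i = F (i+1)`.) -/
theorem exterior_power_filtration_of_short_exact
    (R : Type*) [CommRing R]
    (M' M M'' : Type*) [AddCommGroup M'] [AddCommGroup M] [AddCommGroup M'']
    [Module R M'] [Module R M] [Module R M'']
    [Module.Free R M'] [Module.Finite R M']
    [Module.Free R M] [Module.Finite R M]
    [Module.Free R M''] [Module.Finite R M'']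
    (f : M' →ₗ[R] M) (g : M →ₗ[R] M'')
    (hf : Function.Injective f) (hg : Function.Surjective g)
    (hfg : LinearMap.range f = LinearMap.ker g) (r : ℕ) :
    ∃ F : ℕ → Submodule R (⋀[R]^r M),
      F 0 = ⊤ ∧
      F (r + 1) = ⊥ ∧
      (∀ i, F (i + 1) ≤ F i) ∧
      ∀ i ≤ r, ∃ q : (F i) →ₗ[R] ((⋀[R]^i M') ⊗[R] (⋀[R]^(r - i) M'')),
        Function.Surjective q ∧
        LinearMap.ker q = Submodule.comap (F i).subtype (F (i + 1)) := by
  classical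
  -- split the exact sequence
  obtain ⟨sec, hsec⟩ := Module.projective_lifting_property g (LinearMap.id) hg
  have hg_sec : ∀ y, g (sec y) = y := fun y => DFunLike.congr_fun hsec y
  set φ : (M' × M'') →ₗ[R] M := f.coprod sec with hφ_def
  have hφapp : ∀ p : M' × M'', φ p = f p.1 + sec p.2 := fun p => rfl
  have hφ : Function.Bijective φ := by
    constructor
    · rw [injective_iff_map_eq_zero]
      rintro ⟨x, y⟩ hxy
      rw [hφapp] at hxy
      have hy : y = 0 := by
        have := congrArg g hxy
        rw [map_add, map_zero, hg_sec] at this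
        have hx0 : g (f x) = 0 := by
          have : f x ∈ LinearMap.ker g := hfg ▸ LinearMap.mem_range_self f x
          exact this
        rw [hx0, zero_add] at this
        exact this
      have hx : x = 0 := by
        apply hf
        rw [map_zero]
        rw [hy, map_zero, add_zero] at hxy
        exact hxy
      simp [hx, hy, Prod.ext_iff]
    · intro m
      have hker : m - sec (g m) ∈ LinearMap.ker g := by
        simp [map_sub, hg_sec]
      rw [← hfg] at hker
      obtain ⟨x, hx⟩ := hker
      refine ⟨(x, g m), ?_⟩
      rw [hφapp, hx]
      simp
  let e : (M' × M'') ≃ₗ[R] M := LinearEquiv.ofBijective φ hφ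
  set ι' := Module.Free.ChooseBasisIndex R M' with hι'
  set ι'' := Module.Free.ChooseBasisIndex R M'' with hι''
  let b0' : Module.Basis ι' R M' := Module.Free.chooseBasis R M'
  let b0'' : Module.Basis ι'' R M'' := Module.Free.chooseBasis R M''
  letI : LinearOrder ι' := LinearOrder.lift' (Fintype.equivFin ι') (Equiv.injective _)
  letI : LinearOrder ι'' := LinearOrder.lift' (Fintype.equivFin ι'') (Equiv.injective _)
  letI : LinearOrder (ι' ⊕ ι'') :=
    LinearOrder.lift' (Fintype.equivFin (ι' ⊕ ι'')) (Equiv.injective _)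
  let b : Module.Basis (ι' ⊕ ι'') R M := (b0'.prod b0'').map e
  obtain ⟨F, h0, h1, h2, hq⟩ := EPF.filtration_of_weighted_basis
    (EPF.exteriorBasis b r) (fun k => k.1.toLeft.card) r
    (fun k => le_trans Finset.card_toLeft_le (le_of_eq k.2))
  refine ⟨F, h0, h1, h2, ?_⟩
  intro i hi
  obtain ⟨q0, hq0s, hq0k⟩ := hq i
  let T : Module.Basis _ R ((⋀[R]^i M') ⊗[R] (⋀[R]^(r - i) M'')) :=
    (EPF.exteriorBasis b0' i).tensorProduct (EPF.exteriorBasis b0'' (r - i))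
  let iso :
      ({k : {s : Finset (ι' ⊕ ι'') // s.card = r} // k.1.toLeft.card = i} →₀ R)
        ≃ₗ[R] ((⋀[R]^i M') ⊗[R] (⋀[R]^(r - i) M'')) :=
    (Finsupp.basisSingleOne).equiv T (EPF.sumFinsetEquiv r i hi)
  refine ⟨iso.toLinearMap ∘ₗ q0, ?_, ?_⟩
  · rw [LinearMap.coe_comp]
    exact iso.surjective.comp hq0s
  · rw [LinearMap.ker_comp, LinearEquiv.ker, Submodule.comap_bot]
    exact hq0k
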